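/- arXiv:2401.07485 — 5 statements merged into one kernel-verified Lean document; each statement's English description precedes it below -/
import Mathlib

section
/- Sommerfeld's integral: Let A, B, C be real numbers with A > 0, C > 0 and B > 2√(AC). Let r₁ = (B − √(B² − 4AC))/(2A) and r₂ = (B + √(B² − 4AC))/(2A) be the two (positive) zeros of p(r)² = −A + B/r − C/r². Then ∫_{r₁}^{r₂} √(−A + B/r − C/r²) dr = π (B/(2√A) − √C). -/
open Real intervalIntegral

set_option maxHeartbeats 1000000 in
/-- Sommerfeld's integral: for `A, C > 0` and `B > 2√(AC)`, with `r₁ ≤ r₂` the two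
positive zeros of `-A + B/r - C/r²`, one has
`∫_{r₁}^{r₂} √(-A + B/r - C/r²) dr = π (B/(2√A) - √C)`. -/
theorem sommerfeld_integral (A B C : ℝ) (hA : 0 < A) (hC : 0 < C)
    (hB : B > 2 * Real.sqrt (A * C))
    (r₁ r₂ : ℝ)
    (hr₁ : r₁ = (B - Real.sqrt (B ^ 2 - 4 * A * C)) / (2 * A))
    (hr₂ : r₂ = (B + Real.sqrt (B ^ 2 - 4 * A * C)) / (2 * A)) :
    ∫ r in r₁..r₂, Real.sqrt (-A + B / r - C / r ^ 2)
      = Real.pi * (B / (2 * Real.sqrt A) - Real.sqrt C) := by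
  have hAC : 0 < A * C := mul_pos hA hC
  have hB0 : 0 < B := lt_trans (by positivity) hB
  have hΔ : 0 < B ^ 2 - 4 * A * C := by
    nlinarith [Real.sq_sqrt hAC.le, Real.sqrt_nonneg (A * C)]
  set s := Real.sqrt (B ^ 2 - 4 * A * C) with hs_def
  have hs0 : 0 < s := Real.sqrt_pos.2 hΔ
  have hs2 : s ^ 2 = B ^ 2 - 4 * A * C := Real.sq_sqrt hΔ.le
  have hsB : s < B := by nlinarith
  have hr₁0 : 0 < r₁ := by rw [hr₁]; apply div_pos <;> linarith
  have hr12 : r₁ < r₂ := by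
    rw [hr₁, hr₂, div_lt_div_iff₀ (by linarith) (by linarith)]; nlinarith
  have hQfact : ∀ r : ℝ, -A * r ^ 2 + B * r - C = A * (r - r₁) * (r₂ - r) := by
    intro r
    rw [hr₁, hr₂]
    field_simp
    linear_combination (-1) * hs2
  have hsA : 0 < Real.sqrt A := Real.sqrt_pos.2 hA
  have hsC : 0 < Real.sqrt C := Real.sqrt_pos.2 hC
  set F : ℝ → ℝ := fun r => Real.sqrt (-A * r ^ 2 + B * r - C)
      + B / (2 * Real.sqrt A) * Real.arcsin ((2 * A * r - B) / s)
      - Real.sqrt C * Real.arcsin ((B * r - 2 * C) / (r * s)) with hF_def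
  have key : (∫ r in r₁..r₂, Real.sqrt (-A + B / r - C / r ^ 2)) = F r₂ - F r₁ := by
    apply intervalIntegral.integral_eq_sub_of_hasDeriv_right_of_le hr12.le
    · -- continuity of F on Icc
      apply ContinuousOn.sub
      · apply ContinuousOn.add
        · exact (Real.continuous_sqrt.comp (by continuity)).continuousOn
        · exact (continuous_const.mul (Real.continuous_arcsin.comp (by continuity))).continuousOn
      · apply ContinuousOn.mul continuousOn_const
        apply Real.continuous_arcsin.comp_continuousOn
        apply ContinuousOn.div (by fun_prop) (by fun_prop)
        intro x hx
        have hx0 : 0 < x := lt_of_lt_of_le hr₁0 hx.1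
        exact mul_ne_zero hx0.ne' hs0.ne'
    · -- derivative on Ioo
      intro x hx
      have hx0 : 0 < x := hr₁0.trans hx.1
      have hQx : 0 < -A * x ^ 2 + B * x - C := by
        rw [hQfact]
        exact mul_pos (mul_pos hA (by linarith [hx.1])) (by linarith [hx.2])
      have hq0 : Real.sqrt (-A * x ^ 2 + B * x - C) ≠ 0 :=
        (Real.sqrt_pos.2 hQx).ne'
      -- term 1
      have h1 : HasDerivAt (fun r => Real.sqrt (-A * r ^ 2 + B * r - C))
          ((B - 2 * A * x) / (2 * Real.sqrt (-A * x ^ 2 + B * x - C))) x := by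
        have hp : HasDerivAt (fun r : ℝ => -A * r ^ 2 + B * r - C) (B - 2 * A * x) x := by
          have h := (((hasDerivAt_pow 2 x).const_mul (-A)).add
            ((hasDerivAt_id x).const_mul B)).sub_const C
          refine h.congr_deriv (Eq.symm ?_)
          simp
          ring
        have h := (Real.hasDerivAt_sqrt hQx.ne').comp x hp
        refine h.congr_deriv (Eq.symm ?_)
        field_simp
      -- term 2
      have hu1 : ((2 * A * x - B) / s) ^ 2 < 1 := by
        rw [div_pow, div_lt_one (by positivity)]
        nlinarith [mul_pos hA hQx]
      have hu1abs := abs_lt.1 ((sq_lt_one_iff_abs_lt_one (a := (2 * A * x - B) / s)).mp hu1)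
      have hu1' : HasDerivAt (fun r : ℝ => (2 * A * r - B) / s) (2 * A / s) x := by
        have h := (((hasDerivAt_id x).const_mul (2 * A)).sub_const B).div_const s
        refine h.congr_deriv (Eq.symm ?_)
        simp
      have e1 : (2 * Real.sqrt A * Real.sqrt (-A * x ^ 2 + B * x - C) / s) ^ 2
          = 1 - ((2 * A * x - B) / s) ^ 2 := by
        rw [div_pow, mul_pow, mul_pow, sq_sqrt hA.le, sq_sqrt hQx.le]
        field_simp
        linear_combination -hs2
      have hsq1 : Real.sqrt (1 - ((2 * A * x - B) / s) ^ 2)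
          = 2 * Real.sqrt A * Real.sqrt (-A * x ^ 2 + B * x - C) / s := by
        rw [← e1, Real.sqrt_sq (by positivity)]
      have h2 : HasDerivAt
          (fun r => B / (2 * Real.sqrt A) * Real.arcsin ((2 * A * r - B) / s))
          (B / (2 * Real.sqrt A) * ((1 / Real.sqrt (1 - ((2 * A * x - B) / s) ^ 2)) * (2 * A / s)))
          x :=
        (((Real.hasDerivAt_arcsin hu1abs.1.ne' hu1abs.2.ne).comp x hu1')).const_mul _
      -- term 3
      have hu2 : ((B * x - 2 * C) / (x * s)) ^ 2 < 1 := by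
        rw [div_pow, div_lt_one (by positivity)]
        nlinarith [mul_pos hC hQx]
      have hu2abs := abs_lt.1 ((sq_lt_one_iff_abs_lt_one (a := (B * x - 2 * C) / (x * s))).mp hu2)
      have hu2' : HasDerivAt (fun r : ℝ => (B * r - 2 * C) / (r * s)) (2 * C / (x ^ 2 * s)) x := by
        have hf : HasDerivAt (fun r : ℝ => B * r - 2 * C) B x := by
          simpa using ((hasDerivAt_id x).const_mul B).sub_const (2 * C)
        have hg : HasDerivAt (fun r : ℝ => r * s) s x := by
          simpa using (hasDerivAt_id x).mul_const s
        have h := hf.div hg (by positivity : (0:ℝ) < x * s).ne'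
        refine h.congr_deriv (Eq.symm ?_)
        field_simp
        ring
      have e2 : (2 * Real.sqrt C * Real.sqrt (-A * x ^ 2 + B * x - C) / (x * s)) ^ 2
          = 1 - ((B * x - 2 * C) / (x * s)) ^ 2 := by
        rw [div_pow, mul_pow, mul_pow, sq_sqrt hC.le, sq_sqrt hQx.le]
        field_simp
        linear_combination (-x ^ 2) * hs2
      have hsq2 : Real.sqrt (1 - ((B * x - 2 * C) / (x * s)) ^ 2)
          = 2 * Real.sqrt C * Real.sqrt (-A * x ^ 2 + B * x - C) / (x * s) := by
        rw [← e2, Real.sqrt_sq (by positivity)]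
      have h3 : HasDerivAt
          (fun r => Real.sqrt C * Real.arcsin ((B * r - 2 * C) / (r * s)))
          (Real.sqrt C * ((1 / Real.sqrt (1 - ((B * x - 2 * C) / (x * s)) ^ 2))
            * (2 * C / (x ^ 2 * s)))) x :=
        ((Real.hasDerivAt_arcsin hu2abs.1.ne' hu2abs.2.ne).comp x hu2').const_mul _
      have hF' : HasDerivAt F (Real.sqrt (-A + B / x - C / x ^ 2)) x := by
        have h := (h1.add h2).sub h3
        refine h.congr_deriv (Eq.symm ?_)
        rw [hsq1, hsq2]
        rw [show -A + B / x - C / x ^ 2 = (-A * x ^ 2 + B * x - C) / x ^ 2 by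
          field_simp]
        rw [Real.sqrt_div hQx.le, Real.sqrt_sq hx0.le]
        have hA2 : Real.sqrt A * Real.sqrt A = A := Real.mul_self_sqrt hA.le
        have hC2 : Real.sqrt C * Real.sqrt C = C := Real.mul_self_sqrt hC.le
        have hq2 : Real.sqrt (-A * x ^ 2 + B * x - C) * Real.sqrt (-A * x ^ 2 + B * x - C)
            = -A * x ^ 2 + B * x - C := Real.mul_self_sqrt hQx.le
        set q := Real.sqrt (-A * x ^ 2 + B * x - C) with hq_def
        set a := Real.sqrt A with ha_def
        set c := Real.sqrt C with hc_def
        have hq0' : q ≠ 0 := hq0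
        have ha0 : a ≠ 0 := hsA.ne'
        have hc0 : c ≠ 0 := hsC.ne'
        field_simp
        linear_combination (2 * a ^ 2) * hq2 + (x * B) * hA2
      exact hF'.hasDerivWithinAt
    · -- integrability
      apply ContinuousOn.intervalIntegrable
      apply Real.continuous_sqrt.comp_continuousOn
      rw [Set.uIcc_of_le hr12.le]
      apply ContinuousOn.sub
      · apply ContinuousOn.add continuousOn_const
        exact ContinuousOn.div continuousOn_const (by fun_prop)
          (fun x hx => (lt_of_lt_of_le hr₁0 hx.1).ne')
      · exact ContinuousOn.div continuousOn_const (by fun_prop)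
          (fun x hx => pow_ne_zero 2 (lt_of_lt_of_le hr₁0 hx.1).ne')
  have hr₂0 : 0 < r₂ := hr₁0.trans hr12
  have hQ1 : -A * r₁ ^ 2 + B * r₁ - C = 0 := by rw [hQfact]; ring
  have hQ2 : -A * r₂ ^ 2 + B * r₂ - C = 0 := by rw [hQfact]; ring
  have hu1r₂ : (2 * A * r₂ - B) / s = 1 := by
    rw [hr₂]; field_simp; ring
  have hu1r₁ : (2 * A * r₁ - B) / s = -1 := by
    rw [hr₁]; field_simp; ring
  have hu2r₂ : (B * r₂ - 2 * C) / (r₂ * s) = 1 := by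
    rw [div_eq_one_iff_eq (mul_pos hr₂0 hs0).ne', hr₂]
    field_simp
    linear_combination (-1) * hs2
  have hu2r₁ : (B * r₁ - 2 * C) / (r₁ * s) = -1 := by
    rw [div_eq_iff (mul_pos hr₁0 hs0).ne', hr₁]
    field_simp
    linear_combination (-1) * hs2
  rw [key, hF_def]
  simp only
  rw [hQ1, hQ2, hu1r₂, hu1r₁, hu2r₂, hu2r₁, Real.sqrt_zero, Real.arcsin_one,
    Real.arcsin_neg_one]
  ring
end

section
/- Trigonometric Sommerfeld-type integral: Let A, B, C be real numbers with B > 0, C > 0 and √A > √B + √C. Let θ₁ < θ₂ be the two solutions in the open interval (0, π/2) of A − B/cos²θ − C/sin²θ = 0. Then ∫_{θ₁}^{θ₂} √(A − B/cos²θ − C/sin²θ) dθ = (π/2)(√A − √B − √C). -/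
set_option maxHeartbeats 1000000


open Real intervalIntegral

/-- Trigonometric Sommerfeld-type integral: for `B, C > 0` and `√A > √B + √C`, with
`θ₁ < θ₂` the two zeros in `(0, π/2)` of `A - B/cos²θ - C/sin²θ`, one has
`∫_{θ₁}^{θ₂} √(A - B/cos²θ - C/sin²θ) dθ = (π/2)(√A - √B - √C)`. -/
theorem trigonometric_sommerfeld_integral (A B C : ℝ) (hB : 0 < B) (hC : 0 < C)
    (hA : Real.sqrt A > Real.sqrt B + Real.sqrt C)
    (θ₁ θ₂ : ℝ)
    (hθ₁ : θ₁ ∈ Set.Ioo 0 (Real.pi / 2)) (hθ₂ : θ₂ ∈ Set.Ioo 0 (Real.pi / 2))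
    (hlt : θ₁ < θ₂)
    (hzero₁ : A - B / Real.cos θ₁ ^ 2 - C / Real.sin θ₁ ^ 2 = 0)
    (hzero₂ : A - B / Real.cos θ₂ ^ 2 - C / Real.sin θ₂ ^ 2 = 0) :
    ∫ θ in θ₁..θ₂, Real.sqrt (A - B / Real.cos θ ^ 2 - C / Real.sin θ ^ 2)
      = Real.pi / 2 * (Real.sqrt A - Real.sqrt B - Real.sqrt C) := by
  have hA0 : 0 < A := by
    by_contra h
    push_neg at h
    have h1 : Real.sqrt A = 0 := Real.sqrt_eq_zero'.mpr h
    have h2 : 0 < Real.sqrt B := Real.sqrt_pos.mpr hB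
    have h3 : 0 ≤ Real.sqrt C := Real.sqrt_nonneg C
    linarith
  have hpi : (0:ℝ) < Real.pi := Real.pi_pos
  -- positivity of sin/cos on [θ₁, θ₂]
  have hmem : ∀ x ∈ Set.Icc θ₁ θ₂, 0 < Real.sin x ∧ 0 < Real.cos x := by
    intro x hx
    have hx0 : 0 < x := lt_of_lt_of_le hθ₁.1 hx.1
    have hx2 : x < Real.pi / 2 := lt_of_le_of_lt hx.2 hθ₂.2
    constructor
    · exact Real.sin_pos_of_pos_of_lt_pi hx0 (by linarith)
    · exact Real.cos_pos_of_mem_Ioo ⟨by linarith, hx2⟩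
  have hs1 : 0 < Real.sin θ₁ := (hmem θ₁ ⟨le_refl _, hlt.le⟩).1
  have hc1 : 0 < Real.cos θ₁ := (hmem θ₁ ⟨le_refl _, hlt.le⟩).2
  have hs2 : 0 < Real.sin θ₂ := (hmem θ₂ ⟨hlt.le, le_refl _⟩).1
  have hc2pos : 0 < Real.cos θ₂ := (hmem θ₂ ⟨hlt.le, le_refl _⟩).2
  set u₁ := Real.sin θ₁ ^ 2 with hu1d
  set u₂ := Real.sin θ₂ ^ 2 with hu2d
  have hu1pos : 0 < u₁ := by positivity
  have hu2pos : 0 < u₂ := by positivity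
  have hcos1 : Real.cos θ₁ ^ 2 = 1 - u₁ := Real.cos_sq' θ₁
  have hcos2 : Real.cos θ₂ ^ 2 = 1 - u₂ := Real.cos_sq' θ₂
  have hu1lt : u₁ < 1 := by nlinarith [Real.cos_sq' θ₁]
  have hu2lt : u₂ < 1 := by nlinarith [Real.cos_sq' θ₂]
  have hu12 : u₁ < u₂ := by
    have hmono := Real.strictMonoOn_sin (a := θ₁) (b := θ₂)
      ⟨by linarith [hθ₁.1], by linarith [hθ₁.2]⟩ ⟨by linarith [hθ₂.1], by linarith [hθ₂.2]⟩ hlt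
    exact pow_lt_pow_left₀ hmono hs1.le two_ne_zero
  -- the quadratic relations
  have e₁ : A * u₁ * (1 - u₁) - B * u₁ - C * (1 - u₁) = 0 := by
    have h := hzero₁
    rw [hcos1] at h
    have h1 : (1:ℝ) - u₁ ≠ 0 := by linarith
    field_simp [h1] at h
    linarith
  have e₂ : A * u₂ * (1 - u₂) - B * u₂ - C * (1 - u₂) = 0 := by
    have h := hzero₂
    rw [hcos2] at h
    have h1 : (1:ℝ) - u₂ ≠ 0 := by linarith
    field_simp [h1] at h
    linarith
  have hsum : A * (u₁ + u₂) = A - B + C := by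
    have hfac : (u₁ - u₂) * (A - A * (u₁ + u₂) - B + C) = 0 := by linear_combination e₁ - e₂
    rcases mul_eq_zero.mp hfac with h | h
    · exact absurd (sub_eq_zero.mp h) (ne_of_lt hu12)
    · linarith
  have hprod : C = A * (u₁ * u₂) := by linear_combination -e₁ - u₁ * hsum
  have hBv : B = A * ((1 - u₁) * (1 - u₂)) := by linear_combination hsum + hprod
  set D := A * (u₂ - u₁) with hDd
  have hD : 0 < D := by
    apply mul_pos hA0; linarith
  -- the antiderivative
  set F : ℝ → ℝ := fun θ =>
    (Real.sqrt A * Real.arcsin ((2 * A * Real.sin θ ^ 2 - (A - B + C)) / D)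
      + Real.sqrt B * Real.arcsin (((A + B - C) * Real.cos θ ^ 2 - 2 * B) / (Real.cos θ ^ 2 * D))
      - Real.sqrt C * Real.arcsin (((A - B + C) * Real.sin θ ^ 2 - 2 * C) / (Real.sin θ ^ 2 * D))) / 2
    with hFd
  have h1u1 : (1:ℝ) - u₁ ≠ 0 := by linarith
  have h1u2 : (1:ℝ) - u₂ ≠ 0 := by linarith
  have hAne : A ≠ 0 := hA0.ne'
  have hu21 : u₂ - u₁ ≠ 0 := sub_ne_zero.mpr hu12.ne'
  -- endpoint values of the arcsin arguments
  have hA1 : (2 * A * u₁ - (A - B + C)) / D = -1 := by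
    rw [hDd, hBv, hprod]; field_simp; ring
  have hA2 : (2 * A * u₂ - (A - B + C)) / D = 1 := by
    rw [hDd, hBv, hprod]; field_simp; ring
  have hB1 : ((A + B - C) * (1 - u₁) - 2 * B) / ((1 - u₁) * D) = 1 := by
    rw [hDd, hBv, hprod]; field_simp; ring
  have hB2 : ((A + B - C) * (1 - u₂) - 2 * B) / ((1 - u₂) * D) = -1 := by
    rw [hDd, hBv, hprod]; field_simp; ring
  have hC1 : ((A - B + C) * u₁ - 2 * C) / (u₁ * D) = -1 := by
    rw [hDd, hBv, hprod]; field_simp; ring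
  have hC2 : ((A - B + C) * u₂ - 2 * C) / (u₂ * D) = 1 := by
    rw [hDd, hBv, hprod]; field_simp; ring
  have hcont : ContinuousOn F (Set.Icc θ₁ θ₂) := by
    rw [hFd]
    apply ContinuousOn.div_const
    apply ContinuousOn.sub
    apply ContinuousOn.add
    · exact continuousOn_const.mul (Real.continuous_arcsin.comp_continuousOn
        (((continuous_const.mul (Real.continuous_sin.pow 2)).sub continuous_const).continuousOn.div_const D))
    · refine continuousOn_const.mul (Real.continuous_arcsin.comp_continuousOn (ContinuousOn.div ?_ ?_ ?_))
      · exact ((continuous_const.mul (Real.continuous_cos.pow 2)).sub continuous_const).continuousOn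
      · exact ((Real.continuous_cos.pow 2).mul continuous_const).continuousOn
      · exact fun x hx => mul_ne_zero (pow_ne_zero 2 (hmem x hx).2.ne') hD.ne'
    · refine continuousOn_const.mul (Real.continuous_arcsin.comp_continuousOn (ContinuousOn.div ?_ ?_ ?_))
      · exact ((continuous_const.mul (Real.continuous_sin.pow 2)).sub continuous_const).continuousOn
      · exact ((Real.continuous_sin.pow 2).mul continuous_const).continuousOn
      · exact fun x hx => mul_ne_zero (pow_ne_zero 2 (hmem x hx).1.ne') hD.ne'
  have h1u1' : (1:ℝ) - u₁ ≠ 0 := by linarith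
  have hderiv : ∀ x ∈ Set.Ioo θ₁ θ₂,
      HasDerivWithinAt F (Real.sqrt (A - B / Real.cos x ^ 2 - C / Real.sin x ^ 2)) (Set.Ioi x) x := by
    intro x hx
    have hxm : x ∈ Set.Icc θ₁ θ₂ := ⟨hx.1.le, hx.2.le⟩
    have hsx : 0 < Real.sin x := (hmem x hxm).1
    have hcx : 0 < Real.cos x := (hmem x hxm).2
    set u := Real.sin x ^ 2 with hud
    have hcosx : Real.cos x ^ 2 = 1 - u := Real.cos_sq' x
    have hu0 : 0 < u := by positivity
    have hu1' : u < 1 := by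
      have h5 : 0 < Real.cos x ^ 2 := by positivity
      rw [hcosx] at h5; linarith
    have hul : u₁ < u := by
      have hmono := Real.strictMonoOn_sin (a := θ₁) (b := x)
        ⟨by linarith [hθ₁.1], by linarith [hθ₁.2]⟩
        ⟨by linarith [hθ₁.1, hx.1], by linarith [hx.2, hθ₂.2]⟩ hx.1
      exact pow_lt_pow_left₀ hmono hs1.le two_ne_zero
    have huu : u < u₂ := by
      have hmono := Real.strictMonoOn_sin (a := x) (b := θ₂)
        ⟨by linarith [hθ₁.1, hx.1], by linarith [hx.2, hθ₂.2]⟩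
        ⟨by linarith [hθ₂.1], by linarith [hθ₂.2]⟩ hx.2
      exact pow_lt_pow_left₀ hmono hsx.le two_ne_zero
    set P := A * ((u - u₁) * (u₂ - u)) with hPd
    have hP : 0 < P := by
      apply mul_pos hA0 (mul_pos (by linarith) (by linarith))
    have h1u : (1:ℝ) - u ≠ 0 := by linarith
    -- strictness of the arcsin arguments
    have keyA1 : 2*A*u - (A-B+C) + D = 2*A*(u-u₁) := by
      rw [hDd, hBv, hprod]; ring
    have keyA2 : 2*A*u - (A-B+C) - D = 2*A*(u-u₂) := by
      rw [hDd, hBv, hprod]; ring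
    have keyB1 : (A+B-C)*(1-u) - 2*B + (1-u)*D = 2*A*((1-u₁)*(u₂-u)) := by
      rw [hDd, hBv, hprod]; ring
    have keyB2 : (A+B-C)*(1-u) - 2*B - (1-u)*D = 2*A*((1-u₂)*(u₁-u)) := by
      rw [hDd, hBv, hprod]; ring
    have keyC1 : (A-B+C)*u - 2*C + u*D = 2*A*(u₂*(u-u₁)) := by
      rw [hDd, hBv, hprod]; ring
    have keyC2 : (A-B+C)*u - 2*C - u*D = 2*A*(u₁*(u-u₂)) := by
      rw [hDd, hBv, hprod]; ring
    have hgA1 : (2*A*u - (A-B+C))/D ≠ -1 := by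
      intro h
      rw [div_eq_iff hD.ne'] at h
      have hpos : 0 < 2*A*(u-u₁) := by
        have h1 := sub_pos.mpr hul; positivity
      linarith [keyA1, h]
    have hgA2 : (2*A*u - (A-B+C))/D ≠ 1 := by
      intro h
      rw [div_eq_iff hD.ne'] at h
      have hpos : 0 < 2*A*(u₂-u) := by
        have h1 := sub_pos.mpr huu; positivity
      linarith [keyA2, h]
    have hMB : Real.cos x ^ 2 * D ≠ 0 := mul_ne_zero (pow_ne_zero 2 hcx.ne') hD.ne'
    have hMC : Real.sin x ^ 2 * D ≠ 0 := mul_ne_zero (pow_ne_zero 2 hsx.ne') hD.ne'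
    have hgB1 : ((A+B-C)*Real.cos x^2 - 2*B)/(Real.cos x^2*D) ≠ -1 := by
      intro h
      rw [div_eq_iff hMB, hcosx] at h
      have hpos : 0 < 2*A*((1-u₁)*(u₂-u)) := by
        have h1 : (0:ℝ) < 1 - u₁ := by linarith
        have h2 : (0:ℝ) < u₂ - u := by linarith
        positivity
      linarith [keyB1, h]
    have hgB2 : ((A+B-C)*Real.cos x^2 - 2*B)/(Real.cos x^2*D) ≠ 1 := by
      intro h
      rw [div_eq_iff hMB, hcosx] at h
      have hpos : 0 < 2*A*((1-u₂)*(u-u₁)) := by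
        have h1 : (0:ℝ) < 1 - u₂ := by linarith
        have h2 : (0:ℝ) < u - u₁ := by linarith
        positivity
      linarith [keyB2, h]
    have hgC1 : ((A-B+C)*Real.sin x^2 - 2*C)/(Real.sin x^2*D) ≠ -1 := by
      intro h
      rw [div_eq_iff hMC, ← hud] at h
      have hpos : 0 < 2*A*(u₂*(u-u₁)) := by
        have h1 : (0:ℝ) < u - u₁ := by linarith
        positivity
      linarith [keyC1, h]
    have hgC2 : ((A-B+C)*Real.sin x^2 - 2*C)/(Real.sin x^2*D) ≠ 1 := by
      intro h
      rw [div_eq_iff hMC, ← hud] at h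
      have hpos : 0 < 2*A*(u₁*(u₂-u)) := by
        have h1 : (0:ℝ) < u₂ - u := by linarith
        positivity
      linarith [keyC2, h]
    -- derivatives of the inner functions
    have dA : HasDerivAt (fun θ => (2*A*Real.sin θ^2 - (A-B+C))/D)
        (4*A*Real.sin x*Real.cos x/D) x := by
      have h := (((Real.hasDerivAt_sin x).pow 2).const_mul (2*A)).sub_const (A-B+C)
      have h2 := h.div_const D
      refine h2.congr_deriv ?_
      push_cast
      ring
    have dB : HasDerivAt (fun θ => ((A+B-C)*Real.cos θ^2 - 2*B)/(Real.cos θ^2*D))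
        (-(4*B*Real.sin x*Real.cos x)/((Real.cos x^2)^2*D)) x := by
      have hN := (((Real.hasDerivAt_cos x).pow 2).const_mul (A+B-C)).sub_const (2*B)
      have hM := ((Real.hasDerivAt_cos x).pow 2).mul_const D
      have h2 := hN.div hM hMB
      refine h2.congr_deriv ?_
      simp only [Pi.pow_apply]
      rw [mul_pow]
      field_simp
      ring
    have dC : HasDerivAt (fun θ => ((A-B+C)*Real.sin θ^2 - 2*C)/(Real.sin θ^2*D))
        ((4*C*Real.sin x*Real.cos x)/((Real.sin x^2)^2*D)) x := by
      have hN := (((Real.hasDerivAt_sin x).pow 2).const_mul (A-B+C)).sub_const (2*C)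
      have hM := ((Real.hasDerivAt_sin x).pow 2).mul_const D
      have h2 := hN.div hM hMC
      refine h2.congr_deriv ?_
      simp only [Pi.pow_apply]
      rw [mul_pow]
      field_simp
      ring
    -- arcsin compositions
    have harcA : HasDerivAt (fun θ => Real.arcsin ((2*A*Real.sin θ^2 - (A-B+C))/D))
        (1/Real.sqrt (1 - ((2*A*u - (A-B+C))/D)^2) * (4*A*Real.sin x*Real.cos x/D)) x := by
      have h := (Real.hasDerivAt_arcsin hgA1 hgA2).comp x dA
      exact h
    have harcB : HasDerivAt (fun θ => Real.arcsin (((A+B-C)*Real.cos θ^2 - 2*B)/(Real.cos θ^2*D)))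
        (1/Real.sqrt (1 - (((A+B-C)*Real.cos x^2 - 2*B)/(Real.cos x^2*D))^2)
          * (-(4*B*Real.sin x*Real.cos x)/((Real.cos x^2)^2*D))) x := by
      have h := (Real.hasDerivAt_arcsin hgB1 hgB2).comp x dB
      exact h
    have harcC : HasDerivAt (fun θ => Real.arcsin (((A-B+C)*Real.sin θ^2 - 2*C)/(Real.sin θ^2*D)))
        (1/Real.sqrt (1 - (((A-B+C)*Real.sin x^2 - 2*C)/(Real.sin x^2*D))^2)
          * ((4*C*Real.sin x*Real.cos x)/((Real.sin x^2)^2*D))) x := by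
      have h := (Real.hasDerivAt_arcsin hgC1 hgC2).comp x dC
      exact h
    -- the square-root simplifications
    have keyA : D^2 - (2*A*u - (A-B+C))^2 = 4*(A*P) := by
      rw [hPd, hDd, hBv, hprod]; ring
    have keyB : ((1-u)*D)^2 - ((A+B-C)*(1-u) - 2*B)^2 = 4*(B*P) := by
      rw [hPd, hDd, hBv, hprod]; ring
    have keyC : (u*D)^2 - ((A-B+C)*u - 2*C)^2 = 4*(C*P) := by
      rw [hPd, hDd, hBv, hprod]; ring
    have RA : Real.sqrt (1 - ((2*A*u - (A-B+C))/D)^2) = 2*Real.sqrt A*Real.sqrt P/D := by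
      have h4 : 1 - ((2*A*u - (A-B+C))/D)^2 = (2*Real.sqrt A*Real.sqrt P/D)^2 := by
        have hr : (2*Real.sqrt A*Real.sqrt P/D)^2 = 4*(A*P)/D^2 := by
          rw [div_pow]
          congr 1
          rw [mul_pow, mul_pow, Real.sq_sqrt hA0.le, Real.sq_sqrt hP.le]
          ring
        rw [hr, ← keyA]
        field_simp
      rw [h4, Real.sqrt_sq (div_nonneg (by positivity) hD.le)]
    have RB : Real.sqrt (1 - (((A+B-C)*Real.cos x^2 - 2*B)/(Real.cos x^2*D))^2)
        = 2*Real.sqrt B*Real.sqrt P/(Real.cos x^2*D) := by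
      have h4 : 1 - (((A+B-C)*Real.cos x^2 - 2*B)/(Real.cos x^2*D))^2
          = (2*Real.sqrt B*Real.sqrt P/(Real.cos x^2*D))^2 := by
        have hr : (2*Real.sqrt B*Real.sqrt P/(Real.cos x^2*D))^2 = 4*(B*P)/(Real.cos x^2*D)^2 := by
          rw [div_pow]
          congr 1
          rw [mul_pow, mul_pow, Real.sq_sqrt hB.le, Real.sq_sqrt hP.le]
          ring
        rw [hr, ← keyB, hcosx]
        field_simp
      rw [h4, Real.sqrt_sq (div_nonneg (by positivity) (by positivity))]
    have RC : Real.sqrt (1 - (((A-B+C)*Real.sin x^2 - 2*C)/(Real.sin x^2*D))^2)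
        = 2*Real.sqrt C*Real.sqrt P/(Real.sin x^2*D) := by
      have h4 : 1 - (((A-B+C)*Real.sin x^2 - 2*C)/(Real.sin x^2*D))^2
          = (2*Real.sqrt C*Real.sqrt P/(Real.sin x^2*D))^2 := by
        have hr : (2*Real.sqrt C*Real.sqrt P/(Real.sin x^2*D))^2 = 4*(C*P)/(Real.sin x^2*D)^2 := by
          rw [div_pow]
          congr 1
          rw [mul_pow, mul_pow, Real.sq_sqrt hC.le, Real.sq_sqrt hP.le]
          ring
        rw [hr, ← keyC]
        field_simp
        rw [hud]
        ring
      rw [h4, Real.sqrt_sq (div_nonneg (by positivity) (by positivity))]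
    -- assemble the derivative of F
    have hFder : HasDerivAt F
        ((Real.sqrt A * (1/Real.sqrt (1 - ((2*A*u - (A-B+C))/D)^2) * (4*A*Real.sin x*Real.cos x/D))
          + Real.sqrt B * (1/Real.sqrt (1 - (((A+B-C)*Real.cos x^2 - 2*B)/(Real.cos x^2*D))^2)
              * (-(4*B*Real.sin x*Real.cos x)/((Real.cos x^2)^2*D)))
          - Real.sqrt C * (1/Real.sqrt (1 - (((A-B+C)*Real.sin x^2 - 2*C)/(Real.sin x^2*D))^2)
              * ((4*C*Real.sin x*Real.cos x)/((Real.sin x^2)^2*D)))) / 2) x := by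
      rw [hFd]
      exact (((harcA.const_mul (Real.sqrt A)).add (harcB.const_mul (Real.sqrt B))).sub
        (harcC.const_mul (Real.sqrt C))).div_const 2
    -- identify the derivative with the integrand
    have hp2 : Real.sqrt A^2*Real.sin x^2*Real.cos x^2 - Real.sqrt B^2*Real.sin x^2
        - Real.sqrt C^2*Real.cos x^2 = Real.sqrt P^2 := by
      rw [Real.sq_sqrt hA0.le, Real.sq_sqrt hB.le, Real.sq_sqrt hC.le, Real.sq_sqrt hP.le,
        hcosx, hPd, hBv, hprod]
      ring
    have hQ : A - B/Real.cos x^2 - C/Real.sin x^2 = P/(Real.sin x*Real.cos x)^2 := by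
      rw [mul_pow, hcosx, hPd, hBv, hprod]
      field_simp
      ring
    have hEeq : (Real.sqrt A * (1/Real.sqrt (1 - ((2*A*u - (A-B+C))/D)^2) * (4*A*Real.sin x*Real.cos x/D))
          + Real.sqrt B * (1/Real.sqrt (1 - (((A+B-C)*Real.cos x^2 - 2*B)/(Real.cos x^2*D))^2)
              * (-(4*B*Real.sin x*Real.cos x)/((Real.cos x^2)^2*D)))
          - Real.sqrt C * (1/Real.sqrt (1 - (((A-B+C)*Real.sin x^2 - 2*C)/(Real.sin x^2*D))^2)
              * ((4*C*Real.sin x*Real.cos x)/((Real.sin x^2)^2*D)))) / 2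
        = Real.sqrt (A - B/Real.cos x^2 - C/Real.sin x^2) := by
      rw [RA, RB, RC, hQ, Real.sqrt_div hP.le, Real.sqrt_sq (mul_nonneg hsx.le hcx.le)]
      set a := Real.sqrt A with had
      set b := Real.sqrt B with hbd
      set c₀ := Real.sqrt C with hcd
      set p := Real.sqrt P with hpd
      have ha' : a ≠ 0 := by rw [had]; positivity
      have hb' : b ≠ 0 := by rw [hbd]; positivity
      have hc' : c₀ ≠ 0 := by rw [hcd]; positivity
      have hp' : p ≠ 0 := by
        rw [hpd]
        exact (Real.sqrt_pos.mpr hP).ne'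
      rw [show A = a^2 from (Real.sq_sqrt hA0.le).symm,
          show B = b^2 from (Real.sq_sqrt hB.le).symm,
          show C = c₀^2 from (Real.sq_sqrt hC.le).symm]
      have hp2' : a^2*Real.sin x^2*Real.cos x^2 - b^2*Real.sin x^2 - c₀^2*Real.cos x^2 = p^2 := hp2
      field_simp
      linear_combination 4 * hp2'
    rw [hEeq] at hFder
    exact hFder.hasDerivWithinAt
  have hint : IntervalIntegrable (fun θ => Real.sqrt (A - B / Real.cos θ ^ 2 - C / Real.sin θ ^ 2))
      MeasureTheory.volume θ₁ θ₂ := by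
    apply ContinuousOn.intervalIntegrable_of_Icc hlt.le
    apply Real.continuous_sqrt.comp_continuousOn
    apply ContinuousOn.sub
    apply ContinuousOn.sub continuousOn_const
    · exact continuousOn_const.div (Real.continuous_cos.continuousOn.pow 2)
        (fun x hx => by have := (hmem x hx).2; positivity)
    · exact continuousOn_const.div (Real.continuous_sin.continuousOn.pow 2)
        (fun x hx => by have := (hmem x hx).1; positivity)
  have key := intervalIntegral.integral_eq_sub_of_hasDeriv_right_of_le hlt.le hcont hderiv hint
  rw [key]
  -- evaluate F at the endpoints
  have hval1 : F θ₁ = (Real.sqrt A * (-(Real.pi/2)) + Real.sqrt B * (Real.pi/2)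
      - Real.sqrt C * (-(Real.pi/2))) / 2 := by
    rw [hFd]
    simp only
    rw [hcos1, ← hu1d, hA1, hB1, hC1, Real.arcsin_one, Real.arcsin_neg_one]
  have hval2 : F θ₂ = (Real.sqrt A * (Real.pi/2) + Real.sqrt B * (-(Real.pi/2))
      - Real.sqrt C * (Real.pi/2)) / 2 := by
    rw [hFd]
    simp only
    rw [hcos2, ← hu2d, hA2, hB2, hC2, Real.arcsin_one, Real.arcsin_neg_one]
  rw [hval1, hval2]; ring
end

section
/- Hyperbolic Sommerfeld-type integral: Let ε be a real number with 0 < ε < 1 and let x₀ > 0 be the unique positive real with sech²(x₀) = ε (equivalently cosh x₀ = 1/√ε). Then ∫_{−x₀}^{x₀} √(sech²x − ε) dx = π(1 − √ε). -/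
open Real intervalIntegral
set_option maxHeartbeats 1000000

/-- Hyperbolic Sommerfeld-type integral: for `0 < ε < 1`, with `x₀ > 0` the unique positive
real with `sech²(x₀) = ε`, one has `∫_{-x₀}^{x₀} √(sech²x - ε) dx = π(1 - √ε)`. -/
theorem hyperbolic_sommerfeld_integral (ε : ℝ) (hε₀ : 0 < ε) (hε₁ : ε < 1)
    (x₀ : ℝ) (hx₀ : 0 < x₀) (hsech : (1 / Real.cosh x₀) ^ 2 = ε) :
    ∫ x in (-x₀)..x₀, Real.sqrt ((1 / Real.cosh x) ^ 2 - ε)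
      = Real.pi * (1 - Real.sqrt ε) := by
  have ha0 : (0:ℝ) < Real.sqrt (1 - ε) := Real.sqrt_pos.mpr (by linarith)
  set a : ℝ := Real.sqrt (1 - ε) with ha_def
  have ha2 : a ^ 2 = 1 - ε := Real.sq_sqrt (by linarith)
  have hse : (0:ℝ) < Real.sqrt ε := Real.sqrt_pos.mpr hε₀
  have hse2 : Real.sqrt ε ^ 2 = ε := Real.sq_sqrt hε₀.le
  have hc0 : (0:ℝ) < Real.cosh x₀ := Real.cosh_pos x₀
  have hcsq : ε * Real.cosh x₀ ^ 2 = 1 := by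
    field_simp at hsech
    nlinarith [hsech, hc0]
  set F : ℝ → ℝ := fun x => Real.arcsin (Real.sinh x / (a * Real.cosh x))
      - Real.sqrt ε * Real.arcsin (Real.sqrt ε * Real.sinh x / a) with hF
  have hcontI : Continuous fun x : ℝ => Real.sqrt ((1 / Real.cosh x) ^ 2 - ε) :=
    (((continuous_const.div Real.continuous_cosh
        fun x => (Real.cosh_pos x).ne').pow 2).sub continuous_const).sqrt
  have hcontF : Continuous F := by
    apply Continuous.sub
    · exact Real.continuous_arcsin.comp (Real.continuous_sinh.div
        (continuous_const.mul Real.continuous_cosh)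
        (fun x => by positivity))
    · exact continuous_const.mul (Real.continuous_arcsin.comp
        ((continuous_const.mul Real.continuous_sinh).div_const a))
  have key : ∀ x ∈ Set.Ioo (-x₀) x₀,
      HasDerivAt F (Real.sqrt ((1 / Real.cosh x) ^ 2 - ε)) x := by
    intro x hx
    have hc : (0:ℝ) < Real.cosh x := Real.cosh_pos x
    have hlt : Real.cosh x < Real.cosh x₀ := by
      rw [Real.cosh_lt_cosh, abs_of_pos hx₀, abs_lt]
      exact ⟨hx.1, hx.2⟩
    have hecc : ε * Real.cosh x ^ 2 < 1 := by nlinarith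
    set c : ℝ := Real.cosh x with hcdef
    set s : ℝ := Real.sinh x with hsdef
    have hsinh2 : s ^ 2 = c ^ 2 - 1 := by
      nlinarith [Real.cosh_sq_sub_sinh_sq x]
    have hD : (0:ℝ) < (1 / c) ^ 2 - ε := by
      rw [div_pow, one_pow, sub_pos, lt_div_iff₀ (by positivity)]
      nlinarith
    set D : ℝ := (1 / c) ^ 2 - ε with hDdef
    have hDc : c ^ 2 * D = 1 - ε * c ^ 2 := by
      rw [hDdef]; field_simp
    have hsD : (0:ℝ) < Real.sqrt D := Real.sqrt_pos.mpr hD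
    have hsD2 : Real.sqrt D ^ 2 = D := Real.sq_sqrt hD.le
    have hcinv : c ^ 2 * c⁻¹ ^ 2 = 1 := by
      field_simp
    have hkey1 : a ^ 2 * c ^ 2 - s ^ 2 = c ^ 2 * D := by
      linear_combination c ^ 2 * ha2 - hsinh2 - hDc
    have h1sq : 1 - (s / (a * c)) ^ 2 = D / a ^ 2 := by
      field_simp
      linear_combination hkey1
    have h2sq : 1 - (Real.sqrt ε * s / a) ^ 2 = c ^ 2 * D / a ^ 2 := by
      field_simp
      linear_combination ha2 + (-s^2) * hse2 + (-ε) * hsinh2 + (-1) * hcinv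
    have habs1 : |s / (a * c)| < 1 := by
      rw [← sq_lt_one_iff_abs_lt_one]
      have := div_pos hD (by positivity : (0:ℝ) < a ^ 2)
      linarith [h1sq]
    have habs2 : |Real.sqrt ε * s / a| < 1 := by
      rw [← sq_lt_one_iff_abs_lt_one]
      have := div_pos (mul_pos (by positivity : (0:ℝ) < c ^ 2) hD)
        (by positivity : (0:ℝ) < a ^ 2)
      linarith [h2sq]
    rw [abs_lt] at habs1 habs2
    have hd1 : HasDerivAt (fun y => Real.sinh y / (a * Real.cosh y))
        (1 / (a * c ^ 2)) x := by
      have h := (Real.hasDerivAt_sinh x).div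
        ((Real.hasDerivAt_cosh x).const_mul a) (by positivity)
      convert h using 1
      rfl
      rfl
      rfl
      have h2 := Real.cosh_sq_sub_sinh_sq x
      rw [← hcdef, ← hsdef] at h2
      field_simp
      nlinarith [h2]
    have hd2 : HasDerivAt (fun y => Real.sqrt ε * Real.sinh y / a)
        (Real.sqrt ε * c / a) x := by
      simpa using ((Real.hasDerivAt_sinh x).const_mul (Real.sqrt ε)).div_const a
    have harc1 := (Real.hasDerivAt_arcsin (ne_of_gt habs1.1) (ne_of_lt habs1.2)).comp x hd1
    have harc2 := (Real.hasDerivAt_arcsin (ne_of_gt habs2.1) (ne_of_lt habs2.2)).comp x hd2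
    have hder := harc1.sub (harc2.const_mul (Real.sqrt ε))
    clear_value c s D
    convert hder using 1
    rfl
    rfl
    rfl
    rw [h1sq, h2sq]
    have e1 : Real.sqrt (D / a ^ 2) = Real.sqrt D / a := by
      rw [Real.sqrt_div hD.le, Real.sqrt_sq ha0.le]
    have e2 : Real.sqrt (c ^ 2 * D / a ^ 2) = c * Real.sqrt D / a := by
      rw [Real.sqrt_div (by positivity), Real.sqrt_mul (by positivity),
        Real.sqrt_sq hc.le, Real.sqrt_sq ha0.le]
    rw [e1, e2]
    have hfin : 1 / (Real.sqrt D / a) * (1 / (a * c ^ 2))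
        - Real.sqrt ε * (1 / (c * Real.sqrt D / a) * (Real.sqrt ε * c / a))
        = D / Real.sqrt D := by
      field_simp
      linear_combination (-c^2) * hse2 - hDc
    rw [hfin, Real.div_sqrt]
  have hab : -x₀ ≤ x₀ := by linarith
  have hFT : ∫ x in (-x₀)..x₀, Real.sqrt ((1 / Real.cosh x) ^ 2 - ε)
      = F x₀ - F (-x₀) := by
    apply intervalIntegral.integral_eq_sub_of_hasDeriv_right_of_le hab
      hcontF.continuousOn
      (fun x hx => (key x hx).hasDerivWithinAt)
      (hcontI.intervalIntegrable _ _)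
  rw [hFT]
  have hsinh0 : Real.sinh x₀ = a * Real.cosh x₀ := by
    have h1 : Real.sinh x₀ ^ 2 = (a * Real.cosh x₀) ^ 2 := by
      have := Real.cosh_sq_sub_sinh_sq x₀
      nlinarith
    have h2 : 0 < Real.sinh x₀ := Real.sinh_pos_iff.mpr hx₀
    nlinarith [h1, h2, mul_pos ha0 hc0]
  have hv1 : Real.sinh x₀ / (a * Real.cosh x₀) = 1 := by
    rw [hsinh0]; field_simp
  have hv2 : Real.sqrt ε * Real.sinh x₀ / a = 1 := by
    have h1 : (Real.sqrt ε * Real.sinh x₀) ^ 2 = a ^ 2 := by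
      have := Real.cosh_sq_sub_sinh_sq x₀
      nlinarith
    have h2 : 0 < Real.sqrt ε * Real.sinh x₀ :=
      mul_pos hse (Real.sinh_pos_iff.mpr hx₀)
    have : Real.sqrt ε * Real.sinh x₀ = a := by nlinarith
    rw [this]; field_simp
  have hFx : F x₀ = Real.pi / 2 - Real.sqrt ε * (Real.pi / 2) := by
    simp only [hF, hv1, hv2, Real.arcsin_one]
  have hFnx : F (-x₀) = -(Real.pi / 2) + Real.sqrt ε * (Real.pi / 2) := by
    have e1 : Real.sinh (-x₀) / (a * Real.cosh (-x₀)) = -1 := by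
      rw [Real.sinh_neg, Real.cosh_neg, neg_div, hv1]
    have e2 : Real.sqrt ε * Real.sinh (-x₀) / a = -1 := by
      rw [Real.sinh_neg, mul_neg, neg_div, hv2]
    simp only [hF, e1, e2, Real.arcsin_neg, Real.arcsin_one]
    ring
  rw [hFx, hFnx]
  ring
end

section
/- Let ε be a real number with 0 < ε < 1 and let x₀ > 0 be the unique positive real with sech²(x₀) = ε. Then ∫_{−x₀}^{x₀} dx/√(sech²x − ε) = π/√ε. -/
set_option maxHeartbeats 1000000


open Real intervalIntegral

/-- For `0 < ε < 1`, with `x₀ > 0` the unique positive real with `sech²(x₀) = ε`,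
one has `∫_{-x₀}^{x₀} dx/√(sech²x - ε) = π/√ε`. -/
theorem hyperbolic_sommerfeld_derivative_integral (ε : ℝ) (hε₀ : 0 < ε) (hε₁ : ε < 1)
    (x₀ : ℝ) (hx₀ : 0 < x₀) (hsech : (1 / Real.cosh x₀) ^ 2 = ε) :
    ∫ x in (-x₀)..x₀, 1 / Real.sqrt ((1 / Real.cosh x) ^ 2 - ε)
      = Real.pi / Real.sqrt ε := by
  have hε' : (0:ℝ) < 1 - ε := by linarith
  have hcoshpos := Real.cosh_pos x₀
  have hcosh2 : Real.cosh x₀ ^ 2 * ε = 1 := by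
    rw [← hsech]; field_simp
  set c : ℝ := Real.sinh x₀ with hc
  have hcpos : 0 < c := Real.sinh_pos_iff.2 hx₀
  have hc2 : ε * c ^ 2 = 1 - ε := by
    have := Real.cosh_sq x₀
    nlinarith
  set f : ℝ → ℝ := fun x => 1 / Real.sqrt ((1 / Real.cosh x) ^ 2 - ε) with hf
  set φ : ℝ → ℝ := fun θ => Real.arsinh (c * Real.sin θ) with hφ
  set φ' : ℝ → ℝ := fun θ => c * Real.cos θ / Real.sqrt (1 + (c * Real.sin θ) ^ 2) with hφ'
  have hderiv : ∀ θ : ℝ, HasDerivAt φ (φ' θ) θ := by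
    intro θ
    have h1 : HasDerivAt (fun θ : ℝ => c * Real.sin θ) (c * Real.cos θ) θ :=
      (Real.hasDerivAt_sin θ).const_mul c
    have h2 := (Real.hasDerivAt_arsinh (c * Real.sin θ)).comp θ h1
    convert h2 using 1
    · rfl
    · rfl
    · rfl
    · simp [hφ', div_eq_mul_inv, mul_comm]
  have hinj : Set.InjOn φ (Set.Ioo (-(π/2)) (π/2)) := by
    intro a ha b hb hab
    have : c * Real.sin a = c * Real.sin b := Real.arsinh_injective hab
    have hsab : Real.sin a = Real.sin b := mul_left_cancel₀ hcpos.ne' this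
    exact Real.injOn_sin ⟨ha.1.le, ha.2.le⟩ ⟨hb.1.le, hb.2.le⟩ hsab
  have harsinh_c : Real.arsinh c = x₀ := Real.arsinh_sinh x₀
  have himg : φ '' (Set.Ioo (-(π/2)) (π/2)) = Set.Ioo (-x₀) x₀ := by
    ext x
    constructor
    · rintro ⟨θ, hθ, rfl⟩
      have hs1 : Real.sin θ < 1 := by
        have := Real.sin_lt_sin_of_lt_of_le_pi_div_two (x := θ) (y := π/2)
          hθ.1.le le_rfl hθ.2
        simpa using this
      have hs2 : -1 < Real.sin θ := by
        have := Real.sin_lt_sin_of_lt_of_le_pi_div_two (x := -(π/2)) (y := θ)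
          le_rfl hθ.2.le hθ.1
        simpa using this
      constructor
      · have : Real.arsinh (-c) < Real.arsinh (c * Real.sin θ) :=
          Real.arsinh_strictMono (by nlinarith)
        rwa [Real.arsinh_neg, harsinh_c] at this
      · have : Real.arsinh (c * Real.sin θ) < Real.arsinh c :=
          Real.arsinh_strictMono (by nlinarith)
        rwa [harsinh_c] at this
    · rintro ⟨h1, h2⟩
      have hsx : Real.sinh x ∈ Set.Ioo (-c) c := by
        constructor
        · have := Real.sinh_lt_sinh.2 h1; simpa using this
        · exact Real.sinh_lt_sinh.2 h2
      refine ⟨Real.arcsin (Real.sinh x / c), ?_, ?_⟩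
      · constructor
        · refine Real.neg_pi_div_two_lt_arcsin.2 ?_
          rw [lt_div_iff₀ hcpos]
          nlinarith [hsx.1]
        · exact Real.arcsin_lt_pi_div_two.2 ((div_lt_one hcpos).2 hsx.2)
      · have hd : -1 ≤ Real.sinh x / c := by
          rw [neg_le, ← neg_div]; exact (div_le_one hcpos).2 (by linarith [hsx.1])
        have hd2 : Real.sinh x / c ≤ 1 := (div_le_one hcpos).2 hsx.2.le
        simp only [hφ, Real.sin_arcsin hd hd2]
        rw [mul_div_cancel₀ _ hcpos.ne', Real.arsinh_sinh]
  have hmeas : MeasurableSet (Set.Ioo (-(π/2)) (π/2) : Set ℝ) := measurableSet_Ioo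
  have key : ∫ x in Set.Ioo (-x₀) x₀, f x
      = ∫ θ in Set.Ioo (-(π/2)) (π/2), |φ' θ| • f (φ θ) := by
    rw [← himg]
    exact MeasureTheory.integral_image_eq_integral_abs_deriv_smul hmeas
      (fun θ _ => (hderiv θ).hasDerivWithinAt) hinj f
  have hptwise : ∀ θ ∈ Set.Ioo (-(π/2)) (π/2), |φ' θ| • f (φ θ) = 1 / Real.sqrt ε := by
    intro θ hθ
    have hC : 0 < Real.cos θ := Real.cos_pos_of_mem_Ioo hθ
    set S := Real.sin θ
    set C := Real.cos θ
    have hD2 : (0:ℝ) < 1 + (c * S) ^ 2 := by positivity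
    set D := Real.sqrt (1 + (c * S) ^ 2) with hD
    have hDpos : 0 < D := Real.sqrt_pos.2 hD2
    have hDsq : D ^ 2 = 1 + (c * S) ^ 2 := Real.sq_sqrt hD2.le
    have hcoshφ : Real.cosh (φ θ) = D := Real.cosh_arsinh _
    have hSC : S ^ 2 + C ^ 2 = 1 := by
      have := Real.sin_sq_add_cos_sq θ; simpa [S, C] using this
    have hval : (1 / Real.cosh (φ θ)) ^ 2 - ε = (Real.sqrt (1 - ε) * C / D) ^ 2 := by
      rw [hcoshφ]
      have hsq : Real.sqrt (1 - ε) ^ 2 = 1 - ε := Real.sq_sqrt hε'.le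
      field_simp
      nlinarith [hDsq, hc2, hsq, hSC]
    have hfφ : f (φ θ) = D / (Real.sqrt (1 - ε) * C) := by
      simp only [hf, hval]
      rw [Real.sqrt_sq (by positivity), one_div_div]
    have hφ'val : |φ' θ| = c * C / D := by
      rw [hφ']
      exact abs_of_pos (by positivity)
    rw [hfφ, hφ'val, smul_eq_mul]
    have hsε : Real.sqrt ε > 0 := Real.sqrt_pos.2 hε₀
    have hs1ε : Real.sqrt (1 - ε) > 0 := Real.sqrt_pos.2 hε'
    have hcval : c * Real.sqrt ε = Real.sqrt (1 - ε) := by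
      have h1 : (c * Real.sqrt ε) ^ 2 = (1 - ε) := by
        rw [mul_pow, Real.sq_sqrt hε₀.le]; nlinarith [hc2]
      rw [show c * Real.sqrt ε = Real.sqrt ((c * Real.sqrt ε) ^ 2) from
        (Real.sqrt_sq (by positivity)).symm, h1]
    have hstep : c * C / D * (D / (Real.sqrt (1 - ε) * C)) = c / Real.sqrt (1 - ε) := by
      field_simp
    rw [hstep, div_eq_div_iff hs1ε.ne' hsε.ne', one_mul]
    exact hcval
  have hπ : (0:ℝ) < π := Real.pi_pos
  calc ∫ x in (-x₀)..x₀, f x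
      = ∫ x in Set.Ioo (-x₀) x₀, f x := by
        rw [intervalIntegral.integral_of_le (by linarith), MeasureTheory.integral_Ioc_eq_integral_Ioo]
    _ = ∫ θ in Set.Ioo (-(π/2)) (π/2), |φ' θ| • f (φ θ) := key
    _ = ∫ θ in Set.Ioo (-(π/2)) (π/2), (1 / Real.sqrt ε : ℝ) :=
        MeasureTheory.setIntegral_congr_fun hmeas hptwise
    _ = π / Real.sqrt ε := by
        rw [MeasureTheory.setIntegral_const, Real.volume_real_Ioo, smul_eq_mul]
        rw [max_eq_left (by linarith)]
        ring
end

section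
/- Harmonic-oscillator-type integral: Let a, b, c be real numbers with a > 0, c > 0 and b > 2√(ac), and let η₁ < η₂ be the positive reals with η₁² = (b − √(b² − 4ac))/(2a) and η₂² = (b + √(b² − 4ac))/(2a), i.e. the positive zeros of b − aη² − c/η². Then ∫_{η₁}^{η₂} 2√( b − a η² − c/η² ) dη = π ( b/(2√a) − √c ). -/
open Real intervalIntegral

lemma ho_hasDeriv (p q η : ℝ) (hp : 0 < p) (hpq : p < q) (hη : 0 < η)
    (h1 : p < η ^ 2) (h2 : η ^ 2 < q) :
    HasDerivAt (fun x => Real.sqrt ((q - x ^ 2) * (x ^ 2 - p))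
      + (p + q) / 2 * Real.arcsin ((2 * x ^ 2 - (p + q)) / (q - p))
      - Real.sqrt (p * q) * Real.arcsin (((p + q) * x ^ 2 - 2 * (p * q)) / (x ^ 2 * (q - p))))
    (2 * Real.sqrt ((q - η ^ 2) * (η ^ 2 - p)) / η) η := by
  have hqp : 0 < q - p := by linarith
  have hg1 : 0 < (q - η ^ 2) * (η ^ 2 - p) := mul_pos (by linarith) (by linarith)
  have hηsq : 0 < η ^ 2 := by positivity
  set t := Real.sqrt ((q - η ^ 2) * (η ^ 2 - p)) with ht_def
  have ht : 0 < t := Real.sqrt_pos.2 hg1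
  have ht2 : t ^ 2 = (q - η ^ 2) * (η ^ 2 - p) := Real.sq_sqrt hg1.le
  set m := Real.sqrt (p * q) with hm_def
  have hm : 0 < Real.sqrt (p * q) := Real.sqrt_pos.2 (mul_pos hp (hp.trans hpq))
  have hm2 : Real.sqrt (p * q) ^ 2 = p * q := Real.sq_sqrt (mul_pos hp (hp.trans hpq)).le
  have hx2 : HasDerivAt (fun x : ℝ => x ^ 2) (2 * η) η := by
    simpa using hasDerivAt_pow 2 η
  -- term 1
  have hA : HasDerivAt (fun x : ℝ => (q - x ^ 2) * (x ^ 2 - p))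
      (-(2 * η) * (η ^ 2 - p) + (q - η ^ 2) * (2 * η)) η := by
    have := ((hasDerivAt_const η q).sub hx2).mul (hx2.sub_const p)
    exact this.congr_deriv (by simp only [Pi.sub_apply]; ring)
  have hAs : HasDerivAt (fun x : ℝ => Real.sqrt ((q - x ^ 2) * (x ^ 2 - p)))
      (1 / (2 * t) * (-(2 * η) * (η ^ 2 - p) + (q - η ^ 2) * (2 * η))) η :=
    (Real.hasDerivAt_sqrt (ne_of_gt hg1)).comp η hA
  -- term 2
  have hg2 : HasDerivAt (fun x : ℝ => (2 * x ^ 2 - (p + q)) / (q - p))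
      (2 * (2 * η) / (q - p)) η := ((hx2.const_mul 2).sub_const (p + q)).div_const (q - p)
  have hg2lt : (2 * η ^ 2 - (p + q)) / (q - p) < 1 := by
    rw [div_lt_one hqp]; linarith
  have hg2gt : -1 < (2 * η ^ 2 - (p + q)) / (q - p) := by
    rw [lt_div_iff₀ hqp]; linarith
  have harc2 : HasDerivAt (fun x : ℝ => Real.arcsin ((2 * x ^ 2 - (p + q)) / (q - p)))
      (1 / Real.sqrt (1 - ((2 * η ^ 2 - (p + q)) / (q - p)) ^ 2) * (2 * (2 * η) / (q - p))) η :=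
    (Real.hasDerivAt_arcsin (ne_of_gt hg2gt) (ne_of_lt hg2lt)).comp (h₂ := Real.arcsin) η hg2
  -- term 3
  have hden : HasDerivAt (fun x : ℝ => x ^ 2 * (q - p)) (2 * η * (q - p)) η :=
    hx2.mul_const (q - p)
  have hnum : HasDerivAt (fun x : ℝ => (p + q) * x ^ 2 - 2 * (p * q)) ((p + q) * (2 * η)) η :=
    (hx2.const_mul (p + q)).sub_const (2 * (p * q))
  have hdenne : η ^ 2 * (q - p) ≠ 0 := by positivity
  have hg3 : HasDerivAt (fun x : ℝ => ((p + q) * x ^ 2 - 2 * (p * q)) / (x ^ 2 * (q - p)))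
      (((p + q) * (2 * η) * (η ^ 2 * (q - p)) - ((p + q) * η ^ 2 - 2 * (p * q)) * (2 * η * (q - p)))
        / (η ^ 2 * (q - p)) ^ 2) η := hnum.div hden hdenne
  have hg3lt : ((p + q) * η ^ 2 - 2 * (p * q)) / (η ^ 2 * (q - p)) < 1 := by
    rw [div_lt_one (by positivity)]; nlinarith
  have hg3gt : -1 < ((p + q) * η ^ 2 - 2 * (p * q)) / (η ^ 2 * (q - p)) := by
    rw [lt_div_iff₀ (by positivity)]; nlinarith
  have harc3 : HasDerivAt
      (fun x : ℝ => Real.arcsin (((p + q) * x ^ 2 - 2 * (p * q)) / (x ^ 2 * (q - p))))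
      (1 / Real.sqrt (1 - (((p + q) * η ^ 2 - 2 * (p * q)) / (η ^ 2 * (q - p))) ^ 2)
        * (((p + q) * (2 * η) * (η ^ 2 * (q - p)) - ((p + q) * η ^ 2 - 2 * (p * q)) * (2 * η * (q - p)))
          / (η ^ 2 * (q - p)) ^ 2)) η :=
    (Real.hasDerivAt_arcsin (ne_of_gt hg3gt) (ne_of_lt hg3lt)).comp (h₂ := Real.arcsin) η hg3
  -- sqrt simplifications
  have hs2 : Real.sqrt (1 - ((2 * η ^ 2 - (p + q)) / (q - p)) ^ 2) = 2 * t / (q - p) := by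
    have : 1 - ((2 * η ^ 2 - (p + q)) / (q - p)) ^ 2
        = (2 / (q - p)) ^ 2 * ((q - η ^ 2) * (η ^ 2 - p)) := by
      field_simp; ring
    rw [this, Real.sqrt_mul (sq_nonneg _), Real.sqrt_sq (by positivity), ← ht_def]
    ring
  have hs3 : Real.sqrt (1 - (((p + q) * η ^ 2 - 2 * (p * q)) / (η ^ 2 * (q - p))) ^ 2)
      = 2 * Real.sqrt (p * q) * t / (η ^ 2 * (q - p)) := by
    have : 1 - (((p + q) * η ^ 2 - 2 * (p * q)) / (η ^ 2 * (q - p))) ^ 2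
        = (2 / (η ^ 2 * (q - p))) ^ 2 * ((p * q) * ((q - η ^ 2) * (η ^ 2 - p))) := by
      field_simp; ring
    rw [this, Real.sqrt_mul (sq_nonneg _), Real.sqrt_mul (mul_pos hp (hp.trans hpq)).le,
      Real.sqrt_sq (by positivity), ← ht_def]
    ring
  have htotal := (hAs.add (harc2.const_mul ((p + q) / 2))).sub
      (harc3.const_mul (Real.sqrt (p * q)))
  refine htotal.congr_deriv ?_
  rw [hs2, hs3]
  have e1 : 1 / (2 * t) * (-(2 * η) * (η ^ 2 - p) + (q - η ^ 2) * (2 * η))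
      = η * (p + q - 2 * η ^ 2) / t := by
    field_simp; ring
  have e2 : (p + q) / 2 * (1 / (2 * t / (q - p)) * (2 * (2 * η) / (q - p)))
      = (p + q) * η / t := by
    field_simp
  have e3' : ∀ m : ℝ, 0 < m → m * (1 / (2 * m * t / (η ^ 2 * (q - p)))
      * (((p + q) * (2 * η) * (η ^ 2 * (q - p)) - ((p + q) * η ^ 2 - 2 * (p * q)) * (2 * η * (q - p)))
        / (η ^ 2 * (q - p)) ^ 2)) = 2 * (p * q) / (η * t) := by
    intro m hm0
    field_simp
    ring
  have e3 := e3' _ hm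
  rw [e1, e2, e3]
  have h' : η * (p + q - 2 * η ^ 2) / t + (p + q) * η / t - 2 * (p * q) / (η * t)
      = 2 * ((q - η ^ 2) * (η ^ 2 - p)) / (η * t) := by
    field_simp; ring
  rw [h', ← ht2]
  field_simp

lemma ho_integral (p q η₁ η₂ : ℝ) (hp : 0 < p) (hpq : p < q)
    (h1 : 0 < η₁) (h12 : η₁ ^ 2 = p) (h2 : 0 < η₂) (h22 : η₂ ^ 2 = q) (hlt : η₁ < η₂) :
    ∫ η in η₁..η₂, 2 * Real.sqrt ((q - η ^ 2) * (η ^ 2 - p)) / η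
      = Real.pi * ((p + q) / 2 - Real.sqrt (p * q)) := by
  have hqp : 0 < q - p := by linarith
  have hq0 : 0 < q := hp.trans hpq
  set F : ℝ → ℝ := fun x => Real.sqrt ((q - x ^ 2) * (x ^ 2 - p))
      + (p + q) / 2 * Real.arcsin ((2 * x ^ 2 - (p + q)) / (q - p))
      - Real.sqrt (p * q) * Real.arcsin (((p + q) * x ^ 2 - 2 * (p * q)) / (x ^ 2 * (q - p)))
    with hF_def
  have hcont : ContinuousOn F (Set.Icc η₁ η₂) := by
    apply ContinuousOn.sub
    apply ContinuousOn.add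
    · exact (Real.continuous_sqrt.comp (by fun_prop)).continuousOn
    · exact (continuous_const.mul (Real.continuous_arcsin.comp (by fun_prop))).continuousOn
    · apply ContinuousOn.mul continuousOn_const
      apply Real.continuous_arcsin.comp_continuousOn
      apply ContinuousOn.div (Continuous.continuousOn (by fun_prop))
        (Continuous.continuousOn (by fun_prop))
      intro x hx
      have : 0 < x := lt_of_lt_of_le h1 hx.1
      positivity
  have hderiv : ∀ x ∈ Set.Ioo η₁ η₂,
      HasDerivWithinAt F (2 * Real.sqrt ((q - x ^ 2) * (x ^ 2 - p)) / x) (Set.Ioi x) x := by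
    intro x hx
    have hx0 : 0 < x := h1.trans hx.1
    have hxp : p < x ^ 2 := by nlinarith [hx.1]
    have hxq : x ^ 2 < q := by nlinarith [hx.2]
    exact (ho_hasDeriv p q x hp hpq hx0 hxp hxq).hasDerivWithinAt
  have hint : IntervalIntegrable (fun η => 2 * Real.sqrt ((q - η ^ 2) * (η ^ 2 - p)) / η)
      MeasureTheory.volume η₁ η₂ := by
    apply ContinuousOn.intervalIntegrable
    apply ContinuousOn.div (Continuous.continuousOn (by fun_prop)) continuousOn_id
    intro x hx
    rw [Set.uIcc_of_le hlt.le] at hx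
    exact (lt_of_lt_of_le h1 hx.1).ne'
  rw [intervalIntegral.integral_eq_sub_of_hasDeriv_right_of_le hlt.le hcont hderiv hint]
  have hF2 : F η₂ = (p + q) / 2 * (Real.pi / 2) - Real.sqrt (p * q) * (Real.pi / 2) := by
    rw [hF_def]
    simp only
    rw [h22]
    rw [show (2 * q - (p + q)) / (q - p) = 1 by rw [show 2 * q - (p + q) = q - p by ring,
      div_self hqp.ne']]
    rw [show ((p + q) * q - 2 * (p * q)) / (q * (q - p)) = 1 by
      rw [show (p + q) * q - 2 * (p * q) = q * (q - p) by ring,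
        div_self (by positivity : (q * (q - p)) ≠ 0)]]
    simp [Real.arcsin_one]
  have hF1 : F η₁ = (p + q) / 2 * (-(Real.pi / 2)) - Real.sqrt (p * q) * (-(Real.pi / 2)) := by
    rw [hF_def]
    simp only
    rw [h12]
    rw [show (2 * p - (p + q)) / (q - p) = -1 by rw [show 2 * p - (p + q) = -(q - p) by ring,
      neg_div, div_self hqp.ne']]
    rw [show ((p + q) * p - 2 * (p * q)) / (p * (q - p)) = -1 by
      rw [show (p + q) * p - 2 * (p * q) = -(p * (q - p)) by ring,
        neg_div, div_self (by positivity : (p * (q - p)) ≠ 0)]]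
    simp [Real.arcsin_neg_one]
  rw [hF2, hF1]
  ring

/-- Harmonic-oscillator-type integral: for `a, c > 0` and `b > 2√(ac)`, with `η₁ < η₂`
the positive zeros of `b - aη² - c/η²`, one has
`∫_{η₁}^{η₂} 2√(b - aη² - c/η²) dη = π(b/(2√a) - √c)`. -/
theorem harmonic_oscillator_integral (a b c : ℝ) (ha : 0 < a) (hc : 0 < c)
    (hb : b > 2 * Real.sqrt (a * c))
    (η₁ η₂ : ℝ) (hη₁pos : 0 < η₁) (hη₂pos : 0 < η₂) (hlt : η₁ < η₂)
    (hη₁ : η₁ ^ 2 = (b - Real.sqrt (b ^ 2 - 4 * a * c)) / (2 * a))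
    (hη₂ : η₂ ^ 2 = (b + Real.sqrt (b ^ 2 - 4 * a * c)) / (2 * a)) :
    ∫ η in η₁..η₂, 2 * Real.sqrt (b - a * η ^ 2 - c / η ^ 2)
      = Real.pi * (b / (2 * Real.sqrt a) - Real.sqrt c) := by
  have hac : 0 ≤ a * c := by positivity
  have hb0 : 0 < b := lt_of_le_of_lt (by positivity) hb
  have hdisc : 0 < b ^ 2 - 4 * a * c := by
    nlinarith [Real.sq_sqrt hac, Real.sqrt_nonneg (a * c)]
  have hs2 : Real.sqrt (b ^ 2 - 4 * a * c) ^ 2 = b ^ 2 - 4 * a * c := Real.sq_sqrt hdisc.le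
  set s := Real.sqrt (b ^ 2 - 4 * a * c) with hs_def
  have hs0 : 0 ≤ s := Real.sqrt_nonneg _
  have hkey : (b - s) * (b + s) = 4 * (a * c) := by linear_combination (-1 : ℝ) * hs2
  have hp : 0 < η₁ ^ 2 := by positivity
  have hpq : η₁ ^ 2 < η₂ ^ 2 := by nlinarith
  have hsum : η₁ ^ 2 + η₂ ^ 2 = b / a := by
    rw [hη₁, hη₂, ← add_div, div_eq_div_iff (by positivity) ha.ne']; ring
  have hmul : η₁ ^ 2 * η₂ ^ 2 = c / a := by
    rw [hη₁, hη₂, div_mul_div_comm, hkey, div_eq_div_iff (by positivity) ha.ne']; ring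
  have hbeq : b = a * (η₁ ^ 2 + η₂ ^ 2) := by rw [hsum]; field_simp
  have hceq : c = a * (η₁ ^ 2 * η₂ ^ 2) := by rw [hmul]; field_simp
  have hcong : Set.EqOn (fun η => 2 * Real.sqrt (b - a * η ^ 2 - c / η ^ 2))
      (fun η => Real.sqrt a * (2 * Real.sqrt ((η₂ ^ 2 - η ^ 2) * (η ^ 2 - η₁ ^ 2)) / η))
      (Set.uIcc η₁ η₂) := by
    intro η hη
    rw [Set.uIcc_of_le hlt.le] at hη
    have hη0 : 0 < η := lt_of_lt_of_le hη₁pos hη.1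
    have harg : b - a * η ^ 2 - c / η ^ 2
        = a / η ^ 2 * ((η₂ ^ 2 - η ^ 2) * (η ^ 2 - η₁ ^ 2)) := by
      rw [hbeq, hceq]; field_simp; ring
    simp only
    rw [harg, Real.sqrt_mul (by positivity : (0:ℝ) ≤ a / η ^ 2),
      Real.sqrt_div ha.le, Real.sqrt_sq hη0.le]
    ring
  rw [intervalIntegral.integral_congr hcong, intervalIntegral.integral_const_mul,
    ho_integral (η₁ ^ 2) (η₂ ^ 2) η₁ η₂ hp hpq hη₁pos rfl hη₂pos rfl hlt,
    hsum, hmul, Real.sqrt_div hc.le]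
  have hsa : 0 < Real.sqrt a := Real.sqrt_pos.2 ha
  have haa : Real.sqrt a * Real.sqrt a = a := Real.mul_self_sqrt ha.le
  field_simp
  ring_nf
  linear_combination b * haa
end
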